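/- Let Z be a type, let G be a nonempty finite set of functions g : Z → ℝ, let C ≥ 1, and for each y ∈ {1,…,C} let N_y ≥ 1 and let z_y : {1,…,N_y} → Z be a sample from class y. Set N = Σ_y N_y and let S : {1,…,N} → Z be the concatenation of the samples z_1,…,z_C. Define the empirical Rademacher complexity of G on a sample w : {1,…,n} → Z as R(w) = 2^{-n} · Σ_{σ ∈ {−1,1}^n} max_{g ∈ G} (1/n) Σ_{i=1}^n σ_i · g(w_i). Then R(S) ≤ Σ_{y=1}^C (N_y/N) · R(z_y). -/

import Mathlib

open Finset

/-- The empirical Rademacher complexity of a nonempty finite class `G` of real-valued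
functions on a sample `w : Fin n → Z`: the average over all sign vectors
`σ ∈ {-1, 1}^n` (encoded by `σ : Fin n → Bool`, `true ↦ 1`, `false ↦ -1`) of
`max_{g ∈ G} (1/n) ∑ i, σ i * g (w i)`. -/
noncomputable def empRademacher {Z : Type*} (G : Finset (Z → ℝ)) (hG : G.Nonempty)
    {n : ℕ} (w : Fin n → Z) : ℝ :=
  (1 / 2 ^ n) *
    ∑ σ : Fin n → Bool,
      G.sup' hG fun g => (1 / (n : ℝ)) * ∑ i, (if σ i then (1 : ℝ) else -1) * g (w i)

lemma block_avg {C : ℕ} (N : Fin C → ℕ)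
    (e : (Σ y : Fin C, Fin (N y)) ≃ Fin (∑ y, N y)) (y : Fin C)
    (F : (Fin (N y) → Bool) → ℝ) :
    (1 / 2 ^ (∑ y', N y') : ℝ) *
        ∑ σ : Fin (∑ y', N y') → Bool, F (fun j => σ (e ⟨y, j⟩)) =
      (1 / 2 ^ (N y) : ℝ) * ∑ τ : Fin (N y) → Bool, F τ := by
  classical
  let E : ((Σ y' : Fin C, Fin (N y')) → Bool) ≃ (Fin (∑ y', N y') → Bool) :=
    e.arrowCongr (Equiv.refl Bool)
  let P : ((Σ y' : Fin C, Fin (N y')) → Bool) ≃ ∀ y', Fin (N y') → Bool :=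
    Equiv.piCurry fun _ _ => Bool
  let Q : (∀ y', Fin (N y') → Bool) ≃
      (Fin (N y) → Bool) × ∀ y' : {y' // y' ≠ y}, Fin (N y'.1) → Bool :=
    Equiv.piSplitAt y fun y' => Fin (N y') → Bool
  have h1 : ∑ σ : Fin (∑ y', N y') → Bool, F (fun j => σ (e ⟨y, j⟩)) =
      ∑ τ : (Σ y' : Fin C, Fin (N y')) → Bool, F (fun j => τ ⟨y, j⟩) := by
    rw [← Equiv.sum_comp E (fun σ : Fin (∑ y', N y') → Bool => F (fun j => σ (e ⟨y, j⟩)))]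
    refine Finset.sum_congr rfl fun τ _ => ?_
    congr 1
    funext j
    simp [E, Equiv.arrowCongr]
  have h2 : ∑ τ : (Σ y' : Fin C, Fin (N y')) → Bool, F (fun j => τ ⟨y, j⟩) =
      ∑ h : ∀ y', Fin (N y') → Bool, F (h y) := by
    rw [← Equiv.sum_comp P.symm
      (fun τ : (Σ y' : Fin C, Fin (N y')) → Bool => F (fun j => τ ⟨y, j⟩))]
    refine Finset.sum_congr rfl fun h _ => ?_
    congr 1
  have h3 : ∑ h : ∀ y', Fin (N y') → Bool, F (h y) =
      (Fintype.card (∀ y' : {y' // y' ≠ y}, Fin (N y'.1) → Bool)) •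
        ∑ τ : Fin (N y) → Bool, F τ := by
    rw [← Equiv.sum_comp Q.symm (fun h : ∀ y', Fin (N y') → Bool => F (h y))]
    have : ∀ p : (Fin (N y) → Bool) × ∀ y' : {y' // y' ≠ y}, Fin (N y'.1) → Bool,
        (Q.symm p) y = p.1 := by
      intro p
      simp [Q, Equiv.piSplitAt]
    simp only [this]
    rw [Fintype.sum_prod_type]
    simp [Finset.sum_const, Finset.smul_sum, mul_comm]
  have hcard : (2 : ℕ) ^ (∑ y', N y') = 2 ^ (N y) *
      Fintype.card (∀ y' : {y' // y' ≠ y}, Fin (N y'.1) → Bool) := by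
    have := Fintype.card_congr ((E.symm.trans P).trans Q)
    simpa [Fintype.card_fun] using this
  rw [h1, h2, h3, nsmul_eq_mul]
  have h2M : ((2 : ℝ) ^ (∑ y', N y')) = 2 ^ (N y) *
      (Fintype.card (∀ y' : {y' // y' ≠ y}, Fin (N y'.1) → Bool) : ℝ) := by
    exact_mod_cast hcard
  have hK : (0:ℝ) < (Fintype.card (∀ y' : {y' // y' ≠ y}, Fin (N y'.1) → Bool) : ℝ) := by
    exact_mod_cast Fintype.card_pos
  rw [← mul_assoc]
  congr 1
  rw [h2M]
  field_simp

/-- **Sub-additivity of empirical Rademacher complexity over classes.**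
If `S : Fin N → Z` (with `N = ∑ y, N y`) is the concatenation of the per-class samples
`z y : Fin (N y) → Z` (expressed via a bijection `e` between the disjoint union of the
class indices and `Fin N`), then the empirical Rademacher complexity of `G` on `S` is
at most the `N y / N`-weighted sum of the per-class complexities. -/
theorem empRademacher_le_weighted_sum {Z : Type*}
    (G : Finset (Z → ℝ)) (hG : G.Nonempty)
    (C : ℕ) (hC : 1 ≤ C) (N : Fin C → ℕ) (hN : ∀ y, 1 ≤ N y)
    (z : (y : Fin C) → Fin (N y) → Z)
    (e : (Σ y : Fin C, Fin (N y)) ≃ Fin (∑ y, N y))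
    (S : Fin (∑ y, N y) → Z)
    (hS : ∀ q : Σ y : Fin C, Fin (N y), S (e q) = z q.1 q.2) :
    empRademacher G hG S ≤
      ∑ y, ((N y : ℝ) / ((∑ y', N y' : ℕ) : ℝ)) * empRademacher G hG (z y) := by
  classical
  have hMpos : 0 < ∑ y', N y' :=
    Finset.sum_pos (fun y _ => hN y) ⟨⟨0, hC⟩, Finset.mem_univ _⟩
  have hM : (0:ℝ) < ((∑ y', N y' : ℕ) : ℝ) := by exact_mod_cast hMpos
  unfold empRademacher
  have key : ∀ σ : Fin (∑ y', N y') → Bool,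
      G.sup' hG (fun g => (1 / ((∑ y', N y' : ℕ) : ℝ)) *
          ∑ i, (if σ i then (1:ℝ) else -1) * g (S i)) ≤
      ∑ y, ((N y : ℝ) / ((∑ y', N y' : ℕ) : ℝ)) *
        G.sup' hG (fun g => (1 / (N y : ℝ)) *
          ∑ j, (if σ (e ⟨y, j⟩) then (1:ℝ) else -1) * g (z y j)) := by
    intro σ
    apply Finset.sup'_le
    intro g hg
    have hsum : ∑ i, (if σ i then (1:ℝ) else -1) * g (S i)
        = ∑ y, ∑ j, (if σ (e ⟨y, j⟩) then (1:ℝ) else -1) * g (z y j) := by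
      rw [← Equiv.sum_comp e (fun i => (if σ i then (1:ℝ) else -1) * g (S i))]
      rw [← Finset.univ_sigma_univ, Finset.sum_sigma]
      exact Finset.sum_congr rfl fun y _ => Finset.sum_congr rfl fun j _ => by
        rw [hS ⟨y, j⟩]
    rw [hsum, Finset.mul_sum]
    refine Finset.sum_le_sum fun y _ => ?_
    have hNy : (0:ℝ) < (N y : ℝ) := by exact_mod_cast hN y
    have hrw : (1 / ((∑ y', N y' : ℕ) : ℝ)) *
          ∑ j, (if σ (e ⟨y, j⟩) then (1:ℝ) else -1) * g (z y j)
        = ((N y : ℝ) / ((∑ y', N y' : ℕ) : ℝ)) * ((1 / (N y : ℝ)) *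
          ∑ j, (if σ (e ⟨y, j⟩) then (1:ℝ) else -1) * g (z y j)) := by
      field_simp
    rw [hrw]
    exact mul_le_mul_of_nonneg_left
      (Finset.le_sup' (fun g => (1 / (N y : ℝ)) *
        ∑ j, (if σ (e ⟨y, j⟩) then (1:ℝ) else -1) * g (z y j)) hg)
      (by positivity)
  calc (1 / 2 ^ (∑ y', N y') : ℝ) *
        ∑ σ : Fin (∑ y', N y') → Bool,
          G.sup' hG (fun g => (1 / ((∑ y', N y' : ℕ) : ℝ)) *
            ∑ i, (if σ i then (1:ℝ) else -1) * g (S i))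
      ≤ (1 / 2 ^ (∑ y', N y') : ℝ) *
        ∑ σ : Fin (∑ y', N y') → Bool,
          ∑ y, ((N y : ℝ) / ((∑ y', N y' : ℕ) : ℝ)) *
            G.sup' hG (fun g => (1 / (N y : ℝ)) *
              ∑ j, (if σ (e ⟨y, j⟩) then (1:ℝ) else -1) * g (z y j)) := by
        exact mul_le_mul_of_nonneg_left (Finset.sum_le_sum fun σ _ => key σ)
          (by positivity)
    _ = ∑ y, ((N y : ℝ) / ((∑ y', N y' : ℕ) : ℝ)) *
          ((1 / 2 ^ (N y) : ℝ) * ∑ τ : Fin (N y) → Bool,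
            G.sup' hG (fun g => (1 / (N y : ℝ)) *
              ∑ j, (if τ j then (1:ℝ) else -1) * g (z y j))) := by
        rw [Finset.sum_comm, Finset.mul_sum]
        refine Finset.sum_congr rfl fun y _ => ?_
        rw [← block_avg N e y (fun τ => G.sup' hG (fun g => (1 / (N y : ℝ)) *
          ∑ j, (if τ j then (1:ℝ) else -1) * g (z y j)))]
        rw [← Finset.mul_sum]
        ring
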